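/- Let k be a positive integer and m = 2^k − 1. Identify items with nonzero vectors of F_2^k. For each nonzero i in F_2^k let S_i = { j ≠ 0 : i·j = 1 } (dot product over F_2). Define v_1(T) as the minimum number of sets S_i needed to cover T. Let D' = V \ {0} for a d-dimensional subspace V of F_2^k. Then v_1(M \ D') ≤ k − d, i.e., the complement of D' can be covered by k − d sets S_i. -/

import Mathlib

open Matrix

/-- Set-cover bound: identify the items with the nonzero vectors of `F_2^k` and for each
nonzero `i` let `S_i = { j ≠ 0 : i·j = 1 }` (dot product over `F_2`). For every
`d`-dimensional subspace `V`, the complement `M \ D'` of `D' = V \ {0}` can be covered by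
at most `k − d` of the sets `S_i`; i.e. `v_1(M \ D') ≤ k − d`. -/
theorem stmt8 (k d : ℕ) (hk : 0 < k) (hdk : d ≤ k)
    (V : Submodule (ZMod 2) (Fin k → ZMod 2)) (hV : Module.finrank (ZMod 2) V = d) :
    ∃ I : Finset (Fin k → ZMod 2), (∀ i ∈ I, i ≠ 0) ∧ I.card ≤ k - d ∧
      ∀ j : Fin k → ZMod 2, j ≠ 0 → j ∉ V → ∃ i ∈ I, i ⬝ᵥ j = 1 := by
  classical
  set B : LinearMap.BilinForm (ZMod 2) (Fin k → ZMod 2) :=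
    Matrix.toBilin' (1 : Matrix (Fin k) (Fin k) (ZMod 2)) with hB
  have hBapp : ∀ x y : Fin k → ZMod 2, B x y = x ⬝ᵥ y := by
    intro x y
    simp [hB, Matrix.toBilin'_apply']
  have hrefl : B.IsRefl := by
    intro x y h
    rw [hBapp] at h ⊢
    rwa [dotProduct_comm]
  have hnd : B.Nondegenerate := by
    rw [hB, LinearMap.BilinForm.nondegenerate_toBilin'_iff_det_ne_zero]
    simp
  set W : Submodule (ZMod 2) (Fin k → ZMod 2) := B.orthogonal V with hW
  have hWrank : Module.finrank (ZMod 2) W = k - d := by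
    rw [hW, LinearMap.BilinForm.finrank_orthogonal hnd, hV]
    simp [Module.finrank_fintype_fun_eq_card]
  have horth : B.orthogonal W = V := by
    rw [hW, LinearMap.BilinForm.orthogonal_orthogonal hnd hrefl]
  -- Take a basis of W
  haveI : FiniteDimensional (ZMod 2) W := inferInstance
  let b := Module.finBasis (ZMod 2) W
  refine ⟨Finset.image (fun t => (b t : Fin k → ZMod 2)) Finset.univ, ?_, ?_, ?_⟩
  · intro i hi
    obtain ⟨t, _, ht⟩ := Finset.mem_image.mp hi
    rw [← ht]
    intro h
    exact b.ne_zero t (Subtype.coe_injective (by simpa using h))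
  · calc _ ≤ (Finset.univ : Finset (Fin (Module.finrank (ZMod 2) W))).card :=
          Finset.card_image_le
      _ = Module.finrank (ZMod 2) W := by simp
      _ ≤ k - d := le_of_eq hWrank
  · intro j hj hjV
    by_contra h
    push_neg at h
    apply hjV
    rw [← horth]
    intro n hn
    -- every element of W pairs to 0 with j, since all basis elements do
    have two : ∀ x : ZMod 2, x = 0 ∨ x = 1 := by decide
    have hb : ∀ t, B (b t : Fin k → ZMod 2) j = 0 := by
      intro t
      have h1 := h _ (Finset.mem_image.mpr ⟨t, Finset.mem_univ t, rfl⟩)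
      rw [hBapp]
      rcases two ((b t : Fin k → ZMod 2) ⬝ᵥ j) with h0 | h0
      · exact h0
      · exact absurd h0 h1
    have hWspan : W = Submodule.span (ZMod 2)
        (Set.range (fun t => (b t : Fin k → ZMod 2))) := by
      have := b.span_eq
      conv_lhs => rw [← Submodule.map_subtype_top W, ← this]
      rw [Submodule.map_span]
      congr 1
      ext x
      simp [Set.range_comp]
    have hker : W ≤ LinearMap.ker (B.flip j) := by
      rw [hWspan]
      apply Submodule.span_le.mpr
      rintro x ⟨t, rfl⟩
      simpa [LinearMap.mem_ker] using hb t
    exact hker hn
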